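/- Let F : ℂ × ℝ^r → ℂ be continuous, holomorphic in the first variable, with F(δ, 0) = 0 and ∂_s F(δ, 0) ≠ 0. Suppose also F(s̄, θ) = conj(F(s, θ)) for all s, θ (Schwarz reflection symmetry), and F(s,θ) ≠ 0 whenever Re(s) > δ. Then for θ near 0, the unique zero φ(θ) of s ↦ F(s,θ) near δ (given by the implicit function theorem) is real and satisfies φ(θ) ≤ δ. -/

import Mathlib

open Complex Metric

set_option maxHeartbeats 2000000 in
/-- Reality of the implicit zero: if `F` is continuous, holomorphic in `s`, has a simple
zero at `(δ,0)`, satisfies the Schwarz symmetry `F(s̄,θ) = conj F(s,θ)` and does not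
vanish on `{Re s > δ}`, then for `θ` near `0` the unique zero `φ(θ)` of `s ↦ F(s,θ)`
near `δ` is real and `φ(θ) ≤ δ`. -/
theorem stmt14 (r : ℕ) (δ : ℝ) (F : ℂ → (Fin r → ℝ) → ℂ)
    (hcont : Continuous fun p : ℂ × (Fin r → ℝ) => F p.1 p.2)
    (hhol : ∀ θ, Differentiable ℂ fun s => F s θ)
    (hF0 : F (δ : ℂ) 0 = 0)
    (hds : deriv (fun s => F s 0) (δ : ℂ) ≠ 0)
    (hsym : ∀ s θ, F (starRingEnd ℂ s) θ = starRingEnd ℂ (F s θ))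
    (hnz : ∀ s θ, δ < s.re → F s θ ≠ 0) :
    ∃ ε > (0 : ℝ), ∃ η > (0 : ℝ), ∃ φ : (Fin r → ℝ) → ℂ,
      ContinuousOn φ (Metric.ball (0 : Fin r → ℝ) η) ∧
      ∀ θ : Fin r → ℝ, ‖θ‖ < η →
        F (φ θ) θ = 0 ∧
        φ θ ∈ Metric.ball (δ : ℂ) ε ∧
        (∀ s ∈ Metric.ball (δ : ℂ) ε, F s θ = 0 → s = φ θ) ∧
        (φ θ).im = 0 ∧
        (φ θ).re ≤ δ := by
  classical
  set c : ℂ := deriv (fun s => F s 0) (δ : ℂ) with hcdef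
  have hc : c ≠ 0 := hds
  have hcpos : 0 < ‖c‖ := norm_pos_iff.mpr hc
  -- F is real on the real axis
  have hreal : ∀ (x : ℝ) (θ : Fin r → ℝ), (F (x : ℂ) θ).im = 0 := by
    intro x θ
    have h := hsym (x : ℂ) θ
    rw [Complex.conj_ofReal] at h
    exact Complex.conj_eq_iff_im.mp h.symm
  -- continuity of the derivative of F(·,0) at δ
  have hAn : AnalyticOnNhd ℂ (fun s => F s 0) Set.univ := fun z _ => (hhol 0).analyticAt z
  have hdc : ContinuousAt (deriv (fun s => F s 0)) (δ : ℂ) :=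
    (hAn.deriv (δ : ℂ) (Set.mem_univ _)).continuousAt
  obtain ⟨r2, hr2pos, hr2⟩ := Metric.continuousAt_iff.mp hdc (‖c‖ / 8) (by positivity)
  set ρ : ℝ := r2 / 2 with hρdef
  have hρpos : 0 < ρ := by positivity
  set a : ℝ := ρ / 2 with hadef
  have hapos : 0 < a := by positivity
  have hd1 : ∀ z ∈ closedBall (δ : ℂ) ρ, ‖deriv (fun s => F s 0) z - c‖ ≤ ‖c‖ / 8 := by
    intro z hz
    have : dist z (δ : ℂ) < r2 := lt_of_le_of_lt (mem_closedBall.mp hz) (by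
      rw [hρdef]; linarith)
    have := hr2 this
    rw [dist_eq_norm] at this
    exact this.le
  -- uniform smallness of F(·,θ) - F(·,0) on closedBall δ (2ρ) for small θ
  have hGcont : Continuous fun p : ℂ × (Fin r → ℝ) => ‖F p.1 p.2 - F p.1 0‖ := by
    apply Continuous.norm
    exact hcont.sub (hcont.comp (continuous_fst.prodMk continuous_const))
  have hUopen : IsOpen {p : ℂ × (Fin r → ℝ) | ‖F p.1 p.2 - F p.1 0‖ < ‖c‖ * ρ / 8} :=
    isOpen_lt hGcont continuous_const
  have hsub : closedBall (δ : ℂ) (2 * ρ) ×ˢ ({0} : Set (Fin r → ℝ)) ⊆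
      {p : ℂ × (Fin r → ℝ) | ‖F p.1 p.2 - F p.1 0‖ < ‖c‖ * ρ / 8} := by
    rintro ⟨z, θ⟩ ⟨-, hθ⟩
    simp only [Set.mem_singleton_iff] at hθ
    subst hθ
    simp only [Set.mem_setOf_eq, sub_self, norm_zero]
    positivity
  obtain ⟨u, v, huo, hvo, huu, hvv, huv⟩ :=
    generalized_tube_lemma (isCompact_closedBall (δ : ℂ) (2 * ρ)) isCompact_singleton
      hUopen hsub
  obtain ⟨η, hηpos, hηv⟩ := Metric.isOpen_iff.mp hvo 0 (hvv rfl)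
  have hsmall : ∀ (θ : Fin r → ℝ), ‖θ‖ < η → ∀ z ∈ closedBall (δ : ℂ) (2 * ρ),
      ‖F z θ - F z 0‖ < ‖c‖ * ρ / 8 := by
    intro θ hθ z hz
    have hθv : θ ∈ v := hηv (by simpa [mem_ball, dist_zero_right] using hθ)
    have hm : (z, θ) ∈ u ×ˢ v := Set.mem_prod.mpr ⟨huu hz, hθv⟩
    have h2 := huv hm
    simpa using h2
  -- Cauchy estimate: derivatives are close too
  have hd3 : ∀ (θ : Fin r → ℝ), ‖θ‖ < η → ∀ z ∈ closedBall (δ : ℂ) ρ,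
      ‖deriv (fun s => F s θ) z - c‖ ≤ ‖c‖ / 4 := by
    intro θ hθ z hz
    set g : ℂ → ℂ := fun s => F s θ - F s 0 with hgdef
    have hg : Differentiable ℂ g := (hhol θ).sub (hhol 0)
    have hbd : ∀ w ∈ sphere z ρ, ‖g w‖ ≤ ‖c‖ * ρ / 8 := by
      intro w hw
      apply (hsmall θ hθ w _).le
      have h1 : dist w z = ρ := mem_sphere.mp hw
      have h2 : dist z (δ : ℂ) ≤ ρ := mem_closedBall.mp hz
      have := dist_triangle w z (δ : ℂ)
      rw [mem_closedBall]
      linarith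
    have hcau : ‖deriv g z‖ ≤ (‖c‖ * ρ / 8) / ρ :=
      Complex.norm_deriv_le_of_forall_mem_sphere_norm_le hρpos hg.diffContOnCl hbd
    have hder : deriv g z = deriv (fun s => F s θ) z - deriv (fun s => F s 0) z :=
      deriv_fun_sub (hhol θ z) (hhol 0 z)
    have heq : (‖c‖ * ρ / 8) / ρ = ‖c‖ / 8 := by
      field_simp
    rw [hder, heq] at hcau
    have h1 := hd1 z hz
    calc ‖deriv (fun s => F s θ) z - c‖
        = ‖(deriv (fun s => F s θ) z - deriv (fun s => F s 0) z)
            + (deriv (fun s => F s 0) z - c)‖ := by rw [sub_add_sub_cancel]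
      _ ≤ ‖deriv (fun s => F s θ) z - deriv (fun s => F s 0) z‖
            + ‖deriv (fun s => F s 0) z - c‖ := norm_add_le _ _
      _ ≤ ‖c‖ / 8 + ‖c‖ / 8 := add_le_add hcau h1
      _ = ‖c‖ / 4 := by ring
  -- mean value estimate
  have hE : ∀ (θ : Fin r → ℝ), ‖θ‖ < η → ∀ s ∈ closedBall (δ : ℂ) ρ,
      ∀ s' ∈ closedBall (δ : ℂ) ρ,
      ‖(F s θ - F s' θ) - c * (s - s')‖ ≤ ‖c‖ / 4 * ‖s - s'‖ := by
    intro θ hθ s hs s' hs'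
    set h : ℂ → ℂ := fun w => F w θ - c * w with hhdef
    have key : ∀ x ∈ closedBall (δ : ℂ) ρ,
        HasFDerivWithinAt h
          ((ContinuousLinearMap.smulRight (1 : ℂ →L[ℂ] ℂ)
            (deriv (fun s => F s θ) x - c)).restrictScalars ℝ) (closedBall (δ : ℂ) ρ) x := by
      intro x hx
      have h1 : HasDerivAt h (deriv (fun s => F s θ) x - c) x := by
        have h2 : HasDerivAt (fun s => F s θ) (deriv (fun s => F s θ) x) x :=
          (hhol θ x).hasDerivAt
        have h3 : HasDerivAt (fun w : ℂ => c * w) c x := by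
          simpa using (hasDerivAt_id x).const_mul c
        exact h2.sub h3
      have h4 := (hasDerivAt_iff_hasFDerivAt.mp h1).restrictScalars ℝ
      exact h4.hasFDerivWithinAt
    have hbound : ∀ x ∈ closedBall (δ : ℂ) ρ,
        ‖((ContinuousLinearMap.smulRight (1 : ℂ →L[ℂ] ℂ)
            (deriv (fun s => F s θ) x - c)).restrictScalars ℝ)‖ ≤ ‖c‖ / 4 := by
      intro x hx
      rw [ContinuousLinearMap.norm_restrictScalars,
        ContinuousLinearMap.norm_smulRight_apply, ContinuousLinearMap.one_def,
        ContinuousLinearMap.norm_id, one_mul]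
      exact hd3 θ hθ x hx
    have := (convex_closedBall (δ : ℂ) ρ).norm_image_sub_le_of_norm_hasFDerivWithin_le
      key hbound hs' hs
    have heq : h s - h s' = (F s θ - F s' θ) - c * (s - s') := by
      simp only [hhdef]; ring
    rwa [heq] at this
  -- basic sign information about c
  have hmem0 : ∀ x : ℝ, |x - δ| ≤ ρ → ((x : ℝ) : ℂ) ∈ closedBall (δ : ℂ) ρ := by
    intro x hx
    rw [mem_closedBall, dist_eq_norm]
    rw [show ((x : ℝ) : ℂ) - (δ : ℂ) = ((x - δ : ℝ) : ℂ) by push_cast; ring]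
    rwa [Complex.norm_real, Real.norm_eq_abs]
  have hη0 : ‖(0 : Fin r → ℝ)‖ < η := by simpa using hηpos
  have hmemp : ((δ + a : ℝ) : ℂ) ∈ closedBall (δ : ℂ) ρ := by
    apply hmem0
    rw [show δ + a - δ = a by ring, abs_of_pos hapos]
    linarith
  have hmemm : ((δ - a : ℝ) : ℂ) ∈ closedBall (δ : ℂ) ρ := by
    apply hmem0
    rw [show δ - a - δ = -a by ring, abs_neg, abs_of_pos hapos]
    linarith
  have hmemδ : ((δ : ℝ) : ℂ) ∈ closedBall (δ : ℂ) ρ := by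
    apply hmem0
    simpa using hρpos.le
  have hplus0 : ‖F (((δ + a : ℝ)) : ℂ) 0 - c * (a : ℂ)‖ ≤ ‖c‖ / 4 * a := by
    have h1 := hE 0 hη0 ((δ + a : ℝ) : ℂ) hmemp ((δ : ℝ) : ℂ) hmemδ
    rw [hF0] at h1
    rw [show ((δ + a : ℝ) : ℂ) - ((δ : ℝ) : ℂ) = (a : ℂ) by push_cast; ring] at h1
    rw [Complex.norm_real, Real.norm_eq_abs, abs_of_pos hapos] at h1
    simpa using h1
  have hminus0 : ‖F (((δ - a : ℝ)) : ℂ) 0 + c * (a : ℂ)‖ ≤ ‖c‖ / 4 * a := by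
    have h1 := hE 0 hη0 ((δ - a : ℝ) : ℂ) hmemm ((δ : ℝ) : ℂ) hmemδ
    rw [hF0] at h1
    rw [show ((δ - a : ℝ) : ℂ) - ((δ : ℝ) : ℂ) = -(a : ℂ) by push_cast; ring] at h1
    rw [norm_neg, Complex.norm_real, Real.norm_eq_abs, abs_of_pos hapos] at h1
    rw [show F (((δ - a : ℝ)) : ℂ) 0 + c * (a : ℂ)
      = F (((δ - a : ℝ)) : ℂ) 0 - 0 - c * -(a : ℂ) by ring]
    exact h1
  have him : |c.im| ≤ ‖c‖ / 4 := by
    have h1 : |(F (((δ + a : ℝ)) : ℂ) 0 - c * (a : ℂ)).im| ≤ ‖c‖ / 4 * a :=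
      le_trans (Complex.abs_im_le_norm _) hplus0
    have h2 : (F (((δ + a : ℝ)) : ℂ) 0 - c * (a : ℂ)).im = -(c.im * a) := by
      rw [Complex.sub_im, hreal, Complex.mul_im]
      simp
    rw [h2, abs_neg, abs_mul, abs_of_pos hapos] at h1
    nlinarith [abs_nonneg c.im]
  have hre : 3 / 4 * ‖c‖ ≤ |c.re| := by
    have := Complex.norm_le_abs_re_add_abs_im c
    linarith
  -- the family of real zeros
  have hKey : ∀ θ : Fin r → ℝ, ∃ x : ℝ, x ∈ Set.Icc (δ - a) (δ + a) ∧
      (‖θ‖ < η → F (x : ℂ) θ = 0) := by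
    intro θ
    by_cases hθ : ‖θ‖ < η
    · have hcontre : Continuous fun t : ℝ => (F (t : ℂ) θ).re :=
        Complex.continuous_re.comp (hcont.comp (Complex.continuous_ofReal.prodMk
          continuous_const))
      -- estimates at δ ± a for this θ
      have hplusmem : ((δ + a : ℝ) : ℂ) ∈ closedBall (δ : ℂ) (2 * ρ) := by
        rw [mem_closedBall, dist_eq_norm,
          show ((δ + a : ℝ) : ℂ) - (δ : ℂ) = ((a : ℝ) : ℂ) by push_cast; ring,
          Complex.norm_real, Real.norm_eq_abs, abs_of_pos hapos]
        linarith
      have hminusmem : ((δ - a : ℝ) : ℂ) ∈ closedBall (δ : ℂ) (2 * ρ) := by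
        rw [mem_closedBall, dist_eq_norm,
          show ((δ - a : ℝ) : ℂ) - (δ : ℂ) = ((-a : ℝ) : ℂ) by push_cast; ring,
          Complex.norm_real, Real.norm_eq_abs, abs_neg, abs_of_pos hapos]
        linarith
      have hplus : ‖F (((δ + a : ℝ)) : ℂ) θ - c * (a : ℂ)‖ ≤ ‖c‖ / 2 * a := by
        have h1 := hsmall θ hθ _ hplusmem
        calc ‖F (((δ + a : ℝ)) : ℂ) θ - c * (a : ℂ)‖
            = ‖(F (((δ + a : ℝ)) : ℂ) θ - F (((δ + a : ℝ)) : ℂ) 0)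
                + (F (((δ + a : ℝ)) : ℂ) 0 - c * (a : ℂ))‖ := by rw [sub_add_sub_cancel]
          _ ≤ ‖F (((δ + a : ℝ)) : ℂ) θ - F (((δ + a : ℝ)) : ℂ) 0‖
                + ‖F (((δ + a : ℝ)) : ℂ) 0 - c * (a : ℂ)‖ := norm_add_le _ _
          _ ≤ ‖c‖ * ρ / 8 + ‖c‖ / 4 * a := add_le_add h1.le hplus0
          _ = ‖c‖ / 2 * a := by rw [hadef]; ring
      have hminus : ‖F (((δ - a : ℝ)) : ℂ) θ + c * (a : ℂ)‖ ≤ ‖c‖ / 2 * a := by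
        have h1 := hsmall θ hθ _ hminusmem
        calc ‖F (((δ - a : ℝ)) : ℂ) θ + c * (a : ℂ)‖
            = ‖(F (((δ - a : ℝ)) : ℂ) θ - F (((δ - a : ℝ)) : ℂ) 0)
                + (F (((δ - a : ℝ)) : ℂ) 0 + c * (a : ℂ))‖ := by congr 1; ring
          _ ≤ ‖F (((δ - a : ℝ)) : ℂ) θ - F (((δ - a : ℝ)) : ℂ) 0‖
                + ‖F (((δ - a : ℝ)) : ℂ) 0 + c * (a : ℂ)‖ := norm_add_le _ _
          _ ≤ ‖c‖ * ρ / 8 + ‖c‖ / 4 * a := add_le_add h1.le hminus0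
          _ = ‖c‖ / 2 * a := by rw [hadef]; ring
      -- real-part sign information
      have hplusre : |(F (((δ + a : ℝ)) : ℂ) θ).re - c.re * a| ≤ ‖c‖ / 2 * a := by
        have h1 : |(F (((δ + a : ℝ)) : ℂ) θ - c * (a : ℂ)).re| ≤ ‖c‖ / 2 * a :=
          le_trans (Complex.abs_re_le_norm _) hplus
        rw [Complex.sub_re, Complex.mul_re] at h1
        simpa using h1
      have hminusre : |(F (((δ - a : ℝ)) : ℂ) θ).re + c.re * a| ≤ ‖c‖ / 2 * a := by
        have h1 : |(F (((δ - a : ℝ)) : ℂ) θ + c * (a : ℂ)).re| ≤ ‖c‖ / 2 * a :=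
          le_trans (Complex.abs_re_le_norm _) hminus
        rw [Complex.add_re, Complex.mul_re] at h1
        simpa using h1
      have habs := abs_le.mp hplusre
      have habs' := abs_le.mp hminusre
      have hle : δ - a ≤ δ + a := by linarith
      rcases le_or_gt 0 c.re with hb | hb
      · have hb' : 3 / 4 * ‖c‖ ≤ c.re := by rwa [_root_.abs_of_nonneg hb] at hre
        have h1 : 0 ≤ (F (((δ + a : ℝ)) : ℂ) θ).re := by nlinarith
        have h2 : (F (((δ - a : ℝ)) : ℂ) θ).re ≤ 0 := by nlinarith
        obtain ⟨x, hx1, hx2⟩ := intermediate_value_Icc hle hcontre.continuousOn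
          (Set.mem_Icc.mpr ⟨h2, h1⟩)
        refine ⟨x, hx1, fun _ => ?_⟩
        exact Complex.ext (by simpa using hx2) (by simpa using hreal x θ)
      · have hb' : 3 / 4 * ‖c‖ ≤ -c.re := by
          rwa [_root_.abs_of_neg hb] at hre
        have h1 : (F (((δ + a : ℝ)) : ℂ) θ).re ≤ 0 := by nlinarith
        have h2 : 0 ≤ (F (((δ - a : ℝ)) : ℂ) θ).re := by nlinarith
        obtain ⟨x, hx1, hx2⟩ := intermediate_value_Icc' hle hcontre.continuousOn
          (Set.mem_Icc.mpr ⟨h1, h2⟩)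
        refine ⟨x, hx1, fun _ => ?_⟩
        exact Complex.ext (by simpa using hx2) (by simpa using hreal x θ)
    · exact ⟨δ, Set.mem_Icc.mpr ⟨by linarith, by linarith⟩, fun h => absurd h hθ⟩
  choose x hx1 hx2 using hKey
  set φ : (Fin r → ℝ) → ℂ := fun θ => ((x θ : ℝ) : ℂ) with hφdef
  have hxabs : ∀ θ, |x θ - δ| ≤ a := by
    intro θ
    obtain ⟨h1, h2⟩ := Set.mem_Icc.mp (hx1 θ)
    rw [abs_le]; constructor <;> linarith
  have hφmem : ∀ θ, φ θ ∈ closedBall (δ : ℂ) ρ := by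
    intro θ
    exact hmem0 (x θ) (le_trans (hxabs θ) (by rw [hadef]; linarith))
  refine ⟨ρ, hρpos, η, hηpos, φ, ?_, ?_⟩
  · -- continuity
    intro θ0 hθ0
    have hθ0' : ‖θ0‖ < η := by simpa [mem_ball, dist_zero_right] using hθ0
    have hbound : ∀ θ ∈ ball (0 : Fin r → ℝ) η,
        dist (φ θ) (φ θ0) ≤ 4 / (3 * ‖c‖) * dist (F (φ θ0) θ) (F (φ θ0) θ0) := by
      intro θ hθ
      have hθ' : ‖θ‖ < η := by simpa [mem_ball, dist_zero_right] using hθ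
      have hEθ := hE θ hθ' (φ θ0) (hφmem θ0) (φ θ) (hφmem θ)
      rw [hx2 θ hθ'] at hEθ
      have htri : ‖c‖ * ‖φ θ0 - φ θ‖ ≤ ‖F (φ θ0) θ‖ + ‖c‖ / 4 * ‖φ θ0 - φ θ‖ := by
        have h1 : ‖c * (φ θ0 - φ θ)‖ ≤ ‖F (φ θ0) θ - 0‖
            + ‖(F (φ θ0) θ - 0) - c * (φ θ0 - φ θ)‖ := by
          have := norm_sub_le (F (φ θ0) θ - 0) ((F (φ θ0) θ - 0) - c * (φ θ0 - φ θ))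
          simpa using this
        rw [norm_mul] at h1
        simp only [sub_zero] at h1 hEθ
        linarith
      have hfin : dist (φ θ) (φ θ0) ≤ 4 / (3 * ‖c‖) * ‖F (φ θ0) θ‖ := by
        rw [dist_eq_norm, ← norm_neg, show -(φ θ - φ θ0) = φ θ0 - φ θ by ring]
        rw [div_mul_eq_mul_div, le_div_iff₀ (by positivity)]
        nlinarith [norm_nonneg (φ θ0 - φ θ), norm_nonneg (F (φ θ0) θ)]
      have hdd : dist (F (φ θ0) θ) (F (φ θ0) θ0) = ‖F (φ θ0) θ‖ := by
        rw [hx2 θ0 hθ0', dist_zero_right]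
      rw [hdd]
      exact hfin
    have hGc : Continuous fun θ : Fin r → ℝ => F (φ θ0) θ :=
      hcont.comp (continuous_const.prodMk continuous_id)
    have hGtend : Filter.Tendsto (fun θ => 4 / (3 * ‖c‖) * dist (F (φ θ0) θ) (F (φ θ0) θ0))
        (nhdsWithin θ0 (ball (0 : Fin r → ℝ) η)) (nhds 0) := by
      have h1 : Filter.Tendsto (fun θ => dist (F (φ θ0) θ) (F (φ θ0) θ0))
          (nhdsWithin θ0 (ball (0 : Fin r → ℝ) η)) (nhds 0) := by
        have := (hGc.continuousAt (x := θ0)).continuousWithinAt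
          (s := ball (0 : Fin r → ℝ) η)
        have h2 := this.dist (continuousWithinAt_const (b := F (φ θ0) θ0))
        simpa using h2
      simpa using h1.const_mul (4 / (3 * ‖c‖))
    rw [ContinuousWithinAt, tendsto_iff_dist_tendsto_zero]
    apply squeeze_zero'
    · exact Filter.Eventually.of_forall fun θ => dist_nonneg
    · exact eventually_nhdsWithin_of_forall hbound
    · exact hGtend
  · -- main properties
    intro θ hθ
    have hzero : F (φ θ) θ = 0 := hx2 θ hθ
    refine ⟨hzero, ?_, ?_, by simp [hφdef], ?_⟩
    · rw [mem_ball, dist_eq_norm,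
        show φ θ - (δ : ℂ) = ((x θ - δ : ℝ) : ℂ) by simp only [hφdef]; push_cast; ring,
        Complex.norm_real, Real.norm_eq_abs]
      exact lt_of_le_of_lt (hxabs θ) (by rw [hadef]; linarith)
    · intro s hs hFs
      by_contra hne
      have hEθ := hE θ hθ s (ball_subset_closedBall hs) (φ θ) (hφmem θ)
      rw [hFs, hzero] at hEθ
      simp only [sub_zero, zero_sub, norm_neg, norm_mul] at hEθ
      have hd : 0 < ‖s - φ θ‖ := norm_pos_iff.mpr (sub_ne_zero.mpr hne)
      nlinarith
    · by_contra hgt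
      push_neg at hgt
      have : (φ θ).re = x θ := by simp [hφdef]
      exact hnz (φ θ) θ (by rw [this]; simpa [hφdef] using hgt) hzero
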